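/- arXiv:0809.1188 — 3 statements merged into one kernel-verified Lean document; each statement's English description precedes it below -/
import Mathlib

section
/- Every IP polygon is reflexive: if Δ ⊆ ℝ² is a 2-dimensional lattice polytope whose interior contains exactly one lattice point, namely the origin, then the polar dual Δ* is a lattice polytope. -/
/-- A point of `ℝ^d` is a lattice point if all its coordinates are integers. -/
def IsLatticePoint {d : ℕ} (x : Fin d → ℝ) : Prop := ∀ i, ∃ z : ℤ, x i = (z : ℝ)

/-- A lattice polytope in `ℝ^d` is the convex hull of a finite set of lattice points. -/
def IsLatticePolytope {d : ℕ} (P : Set (Fin d → ℝ)) : Prop :=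
  ∃ V : Finset (Fin d → ℝ), (∀ v ∈ V, IsLatticePoint v) ∧ P = convexHull ℝ (V : Set (Fin d → ℝ))

/-- An IP polytope: a full-dimensional lattice polytope whose interior contains exactly one
lattice point, namely the origin. -/
def IsIPPolytope {d : ℕ} (P : Set (Fin d → ℝ)) : Prop :=
  IsLatticePolytope P ∧ (0 : Fin d → ℝ) ∈ interior P ∧
    ∀ x ∈ interior P, IsLatticePoint x → x = 0

/-- The polar dual of a set `P ⊆ ℝ^d`. -/
def polarDual {d : ℕ} (P : Set (Fin d → ℝ)) : Set (Fin d → ℝ) :=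
  {y | ∀ x ∈ P, -1 ≤ ∑ i, y i * x i}

/-- A reflexive polytope is an IP polytope whose polar dual is a lattice polytope. -/
def IsReflexive {d : ℕ} (P : Set (Fin d → ℝ)) : Prop :=
  IsIPPolytope P ∧ IsLatticePolytope (polarDual P)

private lemma core_lt
    (Δ : Set (Fin 2 → ℝ)) (hconv : Convex ℝ Δ)
    (h0 : (0 : Fin 2 → ℝ) ∈ interior Δ)
    (huniq : ∀ x ∈ interior Δ, IsLatticePoint x → x = 0)
    (n : Fin 2 → ℤ) (u v : ℤ) (hs : u * n 0 + v * n 1 = 1)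
    (a : ℤ) (ha : 2 ≤ a)
    (V1 V2 : Fin 2 → ℤ)
    (hm1 : (fun i => (V1 i : ℝ)) ∈ Δ) (hm2 : (fun i => (V2 i : ℝ)) ∈ Δ)
    (h1 : n 0 * V1 0 + n 1 * V1 1 = a) (h2 : n 0 * V2 0 + n 1 * V2 1 = a)
    (hcd : u * V1 1 - v * V1 0 < u * V2 1 - v * V2 0) : False := by
  obtain ⟨c, hc⟩ : ∃ c : ℤ, c = u * V1 1 - v * V1 0 := ⟨_, rfl⟩
  obtain ⟨d, hd⟩ : ∃ d : ℤ, d = u * V2 1 - v * V2 0 := ⟨_, rfl⟩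
  obtain ⟨k, hk⟩ : ∃ k : ℤ, k = a - 1 := ⟨_, rfl⟩
  obtain ⟨j, hj⟩ : ∃ j : ℤ, j = (k * c + (a - 1)) / a := ⟨_, rfl⟩
  have ha0 : (0:ℤ) < a := by omega
  have hk1 : 1 ≤ k := by omega
  have hdc : c < d := by rw [hc, hd]; exact hcd
  -- division facts
  have hja1 : k * c ≤ j * a := by
    have := Int.lt_ediv_add_one_mul_self (k * c + (a - 1)) ha0
    rw [← hj] at this; nlinarith
  have hja2 : j * a ≤ k * c + (a - 1) := by
    have := Int.ediv_mul_le (k * c + (a - 1)) ha0.ne'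
    rw [← hj] at this; linarith
  have hja3 : j * a ≤ k * d := by nlinarith
  -- representation identities
  have r10 : V1 0 = a * u - c * n 1 := by
    rw [hc]; linear_combination u * h1 - V1 0 * hs
  have r11 : V1 1 = a * v + c * n 0 := by
    rw [hc]; linear_combination v * h1 - V1 1 * hs
  have r20 : V2 0 = a * u - d * n 1 := by
    rw [hd]; linear_combination u * h2 - V2 0 * hs
  have r21 : V2 1 = a * v + d * n 0 := by
    rw [hd]; linear_combination v * h2 - V2 1 * hs
  -- the new lattice point
  obtain ⟨X, hX⟩ : ∃ X : Fin 2 → ℤ, X = ![k * u - j * n 1, k * v + j * n 0] := ⟨_, rfl⟩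
  have hX0 : X 0 = k * u - j * n 1 := by rw [hX]; rfl
  have hX1 : X 1 = k * v + j * n 0 := by rw [hX]; rfl
  -- real coefficients
  have hden : (0:ℝ) < ((a * (d - c) : ℤ) : ℝ) := by exact_mod_cast mul_pos ha0 (by omega)
  obtain ⟨μ, hμdef⟩ : ∃ μ : ℝ, μ = ((k * d - j * a : ℤ) : ℝ) / ((a * (d - c) : ℤ) : ℝ) := ⟨_, rfl⟩
  obtain ⟨ν, hνdef⟩ : ∃ ν : ℝ, ν = ((j * a - k * c : ℤ) : ℝ) / ((a * (d - c) : ℤ) : ℝ) := ⟨_, rfl⟩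
  have hμ0 : 0 ≤ μ := by
    rw [hμdef]; apply div_nonneg _ hden.le; exact_mod_cast sub_nonneg.2 hja3
  have hν0 : 0 ≤ ν := by
    rw [hνdef]; apply div_nonneg _ hden.le; exact_mod_cast sub_nonneg.2 hja1
  have hθeq : μ + ν = (k : ℝ) / (a : ℝ) := by
    rw [hμdef, hνdef]
    have hane : ((a:ℤ):ℝ) ≠ 0 := by exact_mod_cast ha0.ne'
    have hdcne : ((d - c : ℤ) : ℝ) ≠ 0 := by
      exact_mod_cast (sub_ne_zero.mpr (by omega : d ≠ c))
    push_cast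
    push_cast at hane hdcne
    field_simp
    ring
  have hθ1 : μ + ν < 1 := by
    rw [hθeq]
    rw [div_lt_one (by exact_mod_cast ha0)]
    exact_mod_cast (by omega : k < a)
  have hθpos : 0 < μ + ν := by
    rw [hθeq]
    apply div_pos <;> [exact_mod_cast hk1.trans_lt' (by omega); exact_mod_cast ha0]
  -- the convex combination point
  obtain ⟨q, hqdef⟩ : ∃ q : Fin 2 → ℝ,
      q = (μ / (μ + ν)) • (fun i => (V1 i : ℝ)) + (ν / (μ + ν)) • (fun i => (V2 i : ℝ)) := ⟨_, rfl⟩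
  have hq : q ∈ Δ := by
    rw [hqdef]
    exact hconv hm1 hm2 (div_nonneg hμ0 hθpos.le) (div_nonneg hν0 hθpos.le)
      (by field_simp)
  -- real casts of representation identities
  have R10 : ((V1 0 : ℤ) : ℝ) = (a:ℝ) * u - c * n 1 := by exact_mod_cast r10
  have R11 : ((V1 1 : ℤ) : ℝ) = (a:ℝ) * v + c * n 0 := by exact_mod_cast r11
  have R20 : ((V2 0 : ℤ) : ℝ) = (a:ℝ) * u - d * n 1 := by exact_mod_cast r20
  have R21 : ((V2 1 : ℤ) : ℝ) = (a:ℝ) * v + d * n 0 := by exact_mod_cast r21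
  have hane : (a:ℝ) ≠ 0 := by exact_mod_cast ha0.ne'
  have hdcne : (d:ℝ) - (c:ℝ) ≠ 0 := by
    have : (d:ℝ) ≠ (c:ℝ) := by exact_mod_cast (by omega : d ≠ c)
    exact sub_ne_zero.mpr this
  have main : ∀ i, ((X i : ℤ) : ℝ) = μ * V1 i + ν * V2 i := by
    rw [Fin.forall_fin_two]
    constructor
    · rw [hX0, hμdef, hνdef]
      push_cast
      rw [R10, R20]
      field_simp
      ring
    · rw [hX1, hμdef, hνdef]
      push_cast
      rw [R11, R21]
      field_simp
      ring
  have hXcomb : (fun i => (X i : ℝ)) = (1 - (μ + ν)) • (0 : Fin 2 → ℝ) + (μ + ν) • q := by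
    funext i
    rw [hqdef]
    simp only [Pi.add_apply, Pi.smul_apply, Pi.zero_apply, smul_eq_mul, mul_zero, zero_add]
    rw [main i]
    field_simp
  have hXint : (fun i => (X i : ℝ)) ∈ interior Δ := by
    rw [hXcomb]
    exact hconv.combo_interior_self_mem_interior h0 hq (by linarith) hθpos.le (by ring)
  have hXlat : IsLatticePoint (fun i => (X i : ℝ)) := fun i => ⟨X i, rfl⟩
  have hXzero := huniq _ hXint hXlat
  have eX0 : X 0 = 0 := by
    have := congrFun hXzero 0; rw [Pi.zero_apply] at this; exact_mod_cast this
  have eX1 : X 1 = 0 := by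
    have := congrFun hXzero 1; rw [Pi.zero_apply] at this; exact_mod_cast this
  have hA : k * u - j * n 1 = 0 := by rw [← hX0]; exact eX0
  have hB : k * v + j * n 0 = 0 := by rw [← hX1]; exact eX1
  have hk0 : k = 0 := by linear_combination n 0 * hA + n 1 * hB - k * hs
  omega

private lemma lat_of
    (Δ : Set (Fin 2 → ℝ)) (hconv : Convex ℝ Δ)
    (h0 : (0 : Fin 2 → ℝ) ∈ interior Δ)
    (huniq : ∀ x ∈ interior Δ, IsLatticePoint x → x = 0)
    (y : Fin 2 → ℝ) (W1 W2 : Fin 2 → ℤ)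
    (hm1 : (fun i => (W1 i : ℝ)) ∈ Δ) (hm2 : (fun i => (W2 i : ℝ)) ∈ Δ)
    (hWne : W1 ≠ W2)
    (M0 M1 E : ℤ) (hE : 0 < E)
    (hMW1 : M0 * W1 0 + M1 * W1 1 = E) (hMW2 : M0 * W2 0 + M1 * W2 1 = E)
    (hy0 : (E : ℝ) * y 0 = -(M0 : ℝ)) (hy1 : (E : ℝ) * y 1 = -(M1 : ℝ)) :
    IsLatticePoint y := by
  have hMne : ¬(M0 = 0 ∧ M1 = 0) := by
    rintro ⟨rfl, rfl⟩; simp at hMW1; omega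
  have gpos : 0 < Int.gcd M0 M1 := Int.gcd_pos_iff.mpr (by tauto)
  obtain ⟨G, hGdef⟩ : ∃ G : ℤ, G = (Int.gcd M0 M1 : ℤ) := ⟨_, rfl⟩
  have hGpos : 0 < G := by rw [hGdef]; exact_mod_cast gpos
  obtain ⟨n0, hn0⟩ : ∃ n0 : ℤ, n0 = M0 / G := ⟨_, rfl⟩
  obtain ⟨n1, hn1⟩ : ∃ n1 : ℤ, n1 = M1 / G := ⟨_, rfl⟩
  have hGM0 : G * n0 = M0 := by
    rw [hn0, hGdef]; exact Int.mul_ediv_cancel' (Int.gcd_dvd_left _ _)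
  have hGM1 : G * n1 = M1 := by
    rw [hn1, hGdef]; exact Int.mul_ediv_cancel' (Int.gcd_dvd_right _ _)
  have hcop : Int.gcd n0 n1 = 1 := by
    rw [hn0, hn1, hGdef]; exact Int.gcd_div_gcd_div_gcd gpos
  obtain ⟨u, v, hs⟩ : ∃ u v : ℤ, u * n0 + v * n1 = 1 := by
    refine ⟨Int.gcdA n0 n1, Int.gcdB n0 n1, ?_⟩
    have hbez := Int.gcd_eq_gcd_ab n0 n1
    rw [hcop] at hbez
    linear_combination -hbez
  obtain ⟨a, hadef⟩ : ∃ a : ℤ, a = n0 * W1 0 + n1 * W1 1 := ⟨_, rfl⟩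
  have hGa : G * a = E := by rw [hadef]; linear_combination W1 0 * hGM0 + W1 1 * hGM1 + hMW1
  have h2' : n0 * W2 0 + n1 * W2 1 = a := by
    have : G * (n0 * W2 0 + n1 * W2 1) = G * a := by
      rw [hGa]; linear_combination W2 0 * hGM0 + W2 1 * hGM1 + hMW2
    exact mul_left_cancel₀ hGpos.ne' this
  have h1' : n0 * W1 0 + n1 * W1 1 = a := hadef.symm
  have apos : 0 < a := by nlinarith
  rcases (by omega : a = 1 ∨ 2 ≤ a) with ha1 | ha2
  · -- a = 1 : y is the (negated) primitive normal, a lattice point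
    rw [ha1, mul_one] at hGa
    have hEne : (E : ℝ) ≠ 0 := by exact_mod_cast hE.ne'
    have hM0r : (M0 : ℝ) = (E : ℝ) * (n0 : ℝ) := by exact_mod_cast (hGa ▸ hGM0).symm
    have hM1r : (M1 : ℝ) = (E : ℝ) * (n1 : ℝ) := by exact_mod_cast (hGa ▸ hGM1).symm
    have k0 : y 0 = -(n0 : ℝ) := by
      apply mul_left_cancel₀ hEne
      rw [hy0, hM0r]; ring
    have k1 : y 1 = -(n1 : ℝ) := by
      apply mul_left_cancel₀ hEne
      rw [hy1, hM1r]; ring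
    intro i
    match i with
    | 0 => exact ⟨-n0, by rw [k0]; push_cast; ring⟩
    | 1 => exact ⟨-n1, by rw [k1]; push_cast; ring⟩
  · -- a ≥ 2 : contradiction with the core lemma
    have hne : u * W1 1 - v * W1 0 ≠ u * W2 1 - v * W2 0 := by
      intro hcd
      apply hWne
      funext i
      match i with
      | 0 => linear_combination u * h1' - u * h2' - W1 0 * hs + W2 0 * hs - n1 * hcd
      | 1 => linear_combination v * h1' - v * h2' - W1 1 * hs + W2 1 * hs + n0 * hcd
    have hn : (![n0, n1] : Fin 2 → ℤ) 0 = n0 ∧ (![n0, n1] : Fin 2 → ℤ) 1 = n1 := ⟨rfl, rfl⟩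
    rcases lt_or_gt_of_ne hne with h | h
    · exact (core_lt Δ hconv h0 huniq ![n0, n1] u v
        (by rw [hn.1, hn.2]; exact hs) a ha2 W1 W2 hm1 hm2
        (by rw [hn.1, hn.2]; exact h1') (by rw [hn.1, hn.2]; exact h2') h).elim
    · exact (core_lt Δ hconv h0 huniq ![n0, n1] u v
        (by rw [hn.1, hn.2]; exact hs) a ha2 W2 W1 hm2 hm1
        (by rw [hn.1, hn.2]; exact h2') (by rw [hn.1, hn.2]; exact h1') h).elim

private lemma extreme_lattice
    (Δ : Set (Fin 2 → ℝ)) (hconv : Convex ℝ Δ)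
    (h0 : (0 : Fin 2 → ℝ) ∈ interior Δ)
    (huniq : ∀ x ∈ interior Δ, IsLatticePoint x → x = 0)
    (y v1 v2 : Fin 2 → ℝ) (hv1 : v1 ∈ Δ) (hv2 : v2 ∈ Δ)
    (hl1 : IsLatticePoint v1) (hl2 : IsLatticePoint v2)
    (ha1 : y 0 * v1 0 + y 1 * v1 1 = -1) (ha2 : y 0 * v2 0 + y 1 * v2 1 = -1)
    (hdet : v1 0 * v2 1 - v1 1 * v2 0 ≠ 0) : IsLatticePoint y := by
  choose W1 hW1 using hl1
  choose W2 hW2 using hl2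
  have hv1e : v1 = fun i => (W1 i : ℝ) := funext hW1
  have hv2e : v2 = fun i => (W2 i : ℝ) := funext hW2
  have hm1 : (fun i => (W1 i : ℝ)) ∈ Δ := hv1e ▸ hv1
  have hm2 : (fun i => (W2 i : ℝ)) ∈ Δ := hv2e ▸ hv2
  have rd0 : (v1 0 * v2 1 - v1 1 * v2 0) * y 0 = -(v2 1 - v1 1) := by
    linear_combination v2 1 * ha1 - v1 1 * ha2
  have rd1 : (v1 0 * v2 1 - v1 1 * v2 0) * y 1 = -(v1 0 - v2 0) := by
    linear_combination v1 0 * ha2 - v2 0 * ha1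
  obtain ⟨D, hDdef⟩ : ∃ D : ℤ, D = W1 0 * W2 1 - W1 1 * W2 0 := ⟨_, rfl⟩
  have hDr : (D : ℝ) = v1 0 * v2 1 - v1 1 * v2 0 := by
    rw [hDdef]; push_cast
    rw [← hW1 0, ← hW1 1, ← hW2 0, ← hW2 1]
  have hD : D ≠ 0 := by
    intro h; apply hdet; rw [← hDr, h]; norm_num
  have hWne : W1 ≠ W2 := by
    intro h; apply hdet; rw [hv1e, hv2e, h]; ring
  have hy0 : (D : ℝ) * y 0 = -((W2 1 - W1 1 : ℤ) : ℝ) := by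
    rw [hDr]; push_cast; rw [← hW1 1, ← hW2 1]; exact rd0
  have hy1 : (D : ℝ) * y 1 = -((W1 0 - W2 0 : ℤ) : ℝ) := by
    rw [hDr]; push_cast; rw [← hW1 0, ← hW2 0]; exact rd1
  rcases (Ne.lt_or_gt hD) with hneg | hpos
  · refine lat_of Δ hconv h0 huniq y W1 W2 hm1 hm2 hWne
      (-(W2 1 - W1 1)) (-(W1 0 - W2 0)) (-D) (by omega)
      (by rw [hDdef]; ring) (by rw [hDdef]; ring) ?_ ?_
    · push_cast at hy0 ⊢; linarith
    · push_cast at hy1 ⊢; linarith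
  · refine lat_of Δ hconv h0 huniq y W1 W2 hm1 hm2 hWne
      (W2 1 - W1 1) (W1 0 - W2 0) D hpos
      (by rw [hDdef]; ring) (by rw [hDdef]; ring) hy0 hy1

private lemma exists_active_pair
    (V : Finset (Fin 2 → ℝ)) (hVne : V.Nonempty)
    (K : Set (Fin 2 → ℝ))
    (hK : K = {y | ∀ w ∈ V, -1 ≤ ∑ i, y i * w i})
    (y : Fin 2 → ℝ) (hy : y ∈ K.extremePoints ℝ) :
    ∃ v1 ∈ V, ∃ v2 ∈ V, (y 0 * v1 0 + y 1 * v1 1 = -1) ∧ (y 0 * v2 0 + y 1 * v2 1 = -1)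
      ∧ v1 0 * v2 1 - v1 1 * v2 0 ≠ 0 := by
  classical
  obtain ⟨hyK, hext⟩ := hy
  rw [hK] at hyK
  have hsum : ∀ z w : Fin 2 → ℝ, ∑ i, z i * w i = z 0 * w 0 + z 1 * w 1 :=
    fun z w => Fin.sum_univ_two _
  by_contra hcon
  push_neg at hcon
  -- the set of active constraints
  set A : Finset (Fin 2 → ℝ) := V.filter (fun w => y 0 * w 0 + y 1 * w 1 = -1) with hA
  -- find a direction z orthogonal to all active constraints
  obtain ⟨z, hzne, hz⟩ : ∃ z : Fin 2 → ℝ, z ≠ 0 ∧ ∀ w ∈ A, z 0 * w 0 + z 1 * w 1 = 0 := by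
    rcases A.eq_empty_or_nonempty with hAe | ⟨u, hu⟩
    · exact ⟨![1, 0], by
        intro h
        have := congrFun h 0
        simp at this, by rw [hAe]; simp⟩
    · have huV : u ∈ V := (Finset.mem_filter.mp hu).1
      have huact : y 0 * u 0 + y 1 * u 1 = -1 := (Finset.mem_filter.mp hu).2
      refine ⟨![-(u 1), u 0], ?_, ?_⟩
      · intro h
        have h0 := congrFun h 0
        have h1 := congrFun h 1
        simp at h0 h1
        rw [h0, h1] at huact
        norm_num at huact
      · intro w hw
        have hwV : w ∈ V := (Finset.mem_filter.mp hw).1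
        have hwact : y 0 * w 0 + y 1 * w 1 = -1 := (Finset.mem_filter.mp hw).2
        have hdet := hcon u huV w hwV huact hwact
        show -(u 1) * w 0 + u 0 * w 1 = 0
        linarith [hdet]
  -- choose a perturbation size
  set f : (Fin 2 → ℝ) → ℝ := fun w =>
    if z 0 * w 0 + z 1 * w 1 = 0 then 1
    else (y 0 * w 0 + y 1 * w 1 + 1) / |z 0 * w 0 + z 1 * w 1| with hf
  set ε : ℝ := min 1 (V.inf' hVne f) with hε
  have hinactive : ∀ w ∈ V, z 0 * w 0 + z 1 * w 1 ≠ 0 → 0 < y 0 * w 0 + y 1 * w 1 + 1 := by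
    intro w hw hzw
    have hge : -1 ≤ y 0 * w 0 + y 1 * w 1 := by rw [← hsum]; exact hyK w hw
    rcases eq_or_lt_of_le hge with heq | hlt
    · exact absurd (hz w (Finset.mem_filter.mpr ⟨hw, heq.symm⟩)) hzw
    · linarith
  have hεpos : 0 < ε := by
    rw [hε]
    apply lt_min one_pos
    rw [Finset.lt_inf'_iff]
    intro w hw
    rw [hf]
    dsimp only
    split_ifs with h
    · norm_num
    · exact div_pos (hinactive w hw h) (abs_pos.mpr h)
  have hmem : ∀ s : ℝ, |s| ≤ 1 → y + (s * ε) • z ∈ K := by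
    intro s hs
    rw [hK]
    intro w hw
    rw [hsum]
    have hyw : -1 ≤ y 0 * w 0 + y 1 * w 1 := by rw [← hsum]; exact hyK w hw
    have expand : (y + (s * ε) • z) 0 * w 0 + (y + (s * ε) • z) 1 * w 1
        = (y 0 * w 0 + y 1 * w 1) + (s * ε) * (z 0 * w 0 + z 1 * w 1) := by
      simp [Pi.add_apply, Pi.smul_apply, smul_eq_mul]; ring
    rw [expand]
    by_cases hzw : z 0 * w 0 + z 1 * w 1 = 0
    · rw [hzw]; linarith
    · have hεle : ε ≤ (y 0 * w 0 + y 1 * w 1 + 1) / |z 0 * w 0 + z 1 * w 1| := by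
        calc ε ≤ V.inf' hVne f := min_le_right _ _
        _ ≤ f w := Finset.inf'_le f hw
        _ = _ := by rw [hf]; dsimp only; rw [if_neg hzw]
      have habs : |(s * ε) * (z 0 * w 0 + z 1 * w 1)| ≤ y 0 * w 0 + y 1 * w 1 + 1 := by
        rw [abs_mul, abs_mul]
        have h1 : |s| * |ε| ≤ ε := by
          rw [abs_of_pos hεpos]
          nlinarith [abs_nonneg s, hεpos]
        have h2 : ε * |z 0 * w 0 + z 1 * w 1| ≤ y 0 * w 0 + y 1 * w 1 + 1 := by
          rw [← le_div_iff₀ (abs_pos.mpr hzw)] at *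
          exact hεle
        calc |s| * |ε| * |z 0 * w 0 + z 1 * w 1|
            ≤ ε * |z 0 * w 0 + z 1 * w 1| := by
              apply mul_le_mul_of_nonneg_right h1 (abs_nonneg _)
        _ ≤ _ := h2
      have := neg_abs_le ((s * ε) * (z 0 * w 0 + z 1 * w 1))
      linarith
  have hmem1 : y + ε • z ∈ K := by
    have := hmem 1 (by norm_num)
    simpa using this
  have hmem2 : y + (-ε) • z ∈ K := by
    have := hmem (-1) (by norm_num)
    have he : ((-1 : ℝ) * ε) • z = (-ε) • z := by norm_num
    rwa [he] at this
  have hseg : y ∈ openSegment ℝ (y + ε • z) (y + (-ε) • z) := by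
    refine ⟨1/2, 1/2, by norm_num, by norm_num, by norm_num, ?_⟩
    module
  have heq := (hext hmem1 hmem2 hseg)
  have h : ε = 0 ∨ z = 0 := by
    have h := congrArg (fun t => t - y) heq
    simpa using h
  exact hzne (h.resolve_left hεpos.ne')

private lemma lattice_bounded_finite (R : ℝ) :
    {y : Fin 2 → ℝ | IsLatticePoint y ∧ ‖y‖ ≤ R}.Finite := by
  classical
  apply Set.Finite.subset
    (Set.Finite.image (fun p : ℤ × ℤ => (![(p.1 : ℝ), (p.2 : ℝ)] : Fin 2 → ℝ))
      ((Set.finite_Icc (-⌈R⌉) ⌈R⌉).prod (Set.finite_Icc (-⌈R⌉) ⌈R⌉)))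
  rintro y ⟨hlat, hnorm⟩
  obtain ⟨z0, hz0⟩ := hlat 0
  obtain ⟨z1, hz1⟩ := hlat 1
  have hb : ∀ (z : ℤ) (i : Fin 2), y i = (z : ℝ) → z ∈ Set.Icc (-⌈R⌉) ⌈R⌉ := by
    intro z i hzi
    have h1 : |y i| ≤ R := by
      have := norm_le_pi_norm y i
      rw [Real.norm_eq_abs] at this
      linarith
    rw [hzi] at h1
    have hu : (z : ℝ) ≤ (⌈R⌉ : ℝ) := le_trans (le_abs_self _) (h1.trans (Int.le_ceil R))
    have hl : ((-⌈R⌉ : ℤ) : ℝ) ≤ (z : ℝ) := by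
      push_cast
      have := neg_abs_le ((z : ℝ))
      have h2 : -(⌈R⌉ : ℝ) ≤ -|(z : ℝ)| := by
        have := h1.trans (Int.le_ceil R); linarith
      linarith
    exact ⟨by exact_mod_cast hl, by exact_mod_cast hu⟩
  refine ⟨(z0, z1), ⟨hb z0 0 hz0, hb z1 1 hz1⟩, ?_⟩
  apply funext
  rw [Fin.forall_fin_two]
  constructor
  · simp [hz0]
  · simp [hz1]

/-- every IP polygon is reflexive. -/
theorem IP_polygon_is_reflexive (Δ : Set (Fin 2 → ℝ)) (h : IsIPPolytope Δ) :
    IsLatticePolytope (polarDual Δ) := by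
  classical
  obtain ⟨⟨V, hVlat, hVhull⟩, h0, huniq⟩ := h
  have hVne : V.Nonempty := by
    rcases V.eq_empty_or_nonempty with he | hne
    · exfalso
      rw [he] at hVhull
      simp only [Finset.coe_empty, convexHull_empty] at hVhull
      rw [hVhull] at h0
      simp at h0
    · exact hne
  have hconv : Convex ℝ Δ := hVhull ▸ convex_convexHull ℝ _
  have hVsub : ∀ w ∈ V, w ∈ Δ := fun w hw => hVhull ▸ subset_convexHull ℝ _ hw
  -- description of the polar dual via the vertex set
  have hKdesc : polarDual Δ = {y | ∀ w ∈ V, -1 ≤ ∑ i, y i * w i} := by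
    apply Set.Subset.antisymm
    · intro y hy w hw
      exact hy w (hVsub w hw)
    · intro y hy x hx
      rw [hVhull] at hx
      have hhalf : Convex ℝ {x : Fin 2 → ℝ | -1 ≤ ∑ i, y i * x i} := by
        intro x1 hx1 x2 hx2 a b ha hb hab
        simp only [Set.mem_setOf_eq] at *
        have heq : ∑ i, y i * (a • x1 + b • x2) i
            = a * ∑ i, y i * x1 i + b * ∑ i, y i * x2 i := by
          rw [Fin.sum_univ_two, Fin.sum_univ_two, Fin.sum_univ_two]
          simp only [Pi.add_apply, Pi.smul_apply, smul_eq_mul]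
          ring
        rw [heq]
        nlinarith
      exact convexHull_min (fun w hw => hy w hw) hhalf hx
  set K := polarDual Δ with hKdef
  have hKconv : Convex ℝ K := by
    intro y1 h1 y2 h2 a b ha hb hab x hx
    have e1 := h1 x hx
    have e2 := h2 x hx
    have heq : ∑ i, (a • y1 + b • y2) i * x i
        = a * ∑ i, y1 i * x i + b * ∑ i, y2 i * x i := by
      rw [Fin.sum_univ_two, Fin.sum_univ_two, Fin.sum_univ_two]
      simp only [Pi.add_apply, Pi.smul_apply, smul_eq_mul]
      ring
    show -1 ≤ ∑ i, (a • y1 + b • y2) i * x i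
    rw [heq]
    nlinarith
  -- a ball around the origin inside Δ
  obtain ⟨r, hr, hball⟩ : ∃ r > 0, Metric.ball (0 : Fin 2 → ℝ) r ⊆ Δ := by
    rw [mem_interior_iff_mem_nhds] at h0
    rcases Metric.mem_nhds_iff.mp h0 with ⟨r, hr, hb⟩
    exact ⟨r, hr, hb⟩
  -- K is bounded
  have hKbound : ∀ y ∈ K, ‖y‖ ≤ 2 / r := by
    intro y hy
    have key : ∀ i : Fin 2, |y i| ≤ 2 / r := by
      intro i
      have haux : ∀ c : ℝ, |c| ≤ r / 2 → -1 ≤ y i * c := by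
        intro c hc
        have hx : (fun j => if j = i then c else 0) ∈ Metric.ball (0 : Fin 2 → ℝ) r := by
          rw [Metric.mem_ball, dist_zero_right]
          rw [pi_norm_lt_iff hr]
          intro j
          rw [Real.norm_eq_abs]
          by_cases hj : j = i
          · rw [if_pos hj]; linarith
          · rw [if_neg hj]; simp [hr]
        have hsum : ∑ j, y j * (if j = i then c else 0) = y i * c := by
          rw [Finset.sum_eq_single_of_mem i (Finset.mem_univ i)]
          · rw [if_pos rfl]
          · intro j _ hj
            rw [if_neg hj, mul_zero]
        have := hy _ (hball hx)
        rwa [hsum] at this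
      rcases le_or_gt 0 (y i) with hpos | hneg
      · have := haux (-(r/2)) (by rw [abs_neg, abs_of_pos (by linarith)])
        rw [abs_of_nonneg hpos, le_div_iff₀ hr]
        nlinarith
      · have := haux (r/2) (by rw [abs_of_pos (by linarith)])
        rw [abs_of_neg hneg]
        rw [le_div_iff₀ hr]
        nlinarith
    rw [pi_norm_le_iff_of_nonneg (by positivity)]
    intro i
    rw [Real.norm_eq_abs]
    exact key i
  -- K is closed
  have hKclosed : IsClosed K := by
    have : K = ⋂ w ∈ V, {y : Fin 2 → ℝ | -1 ≤ ∑ i, y i * w i} := by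
      rw [hKdesc]; ext y; simp
    rw [this]
    apply isClosed_biInter
    intro w hw
    exact isClosed_le continuous_const
      (continuous_finset_sum _ fun i _ => (continuous_apply i).mul continuous_const)
  have hKcompact : IsCompact K := by
    apply Metric.isCompact_of_isClosed_isBounded hKclosed
    have hsub : K ⊆ Metric.closedBall (0 : Fin 2 → ℝ) (2/r) := by
      intro y hy
      rw [Metric.mem_closedBall, dist_zero_right]
      exact hKbound y hy
    exact Metric.isBounded_closedBall.subset hsub
  -- extreme points are lattice points
  have hElat : ∀ y ∈ K.extremePoints ℝ, IsLatticePoint y := by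
    intro y hy
    obtain ⟨v1, hv1, v2, hv2, ha1, ha2, hdet⟩ := exists_active_pair V hVne K hKdesc y hy
    exact extreme_lattice Δ hconv h0 huniq y v1 v2 (hVsub v1 hv1) (hVsub v2 hv2)
      (hVlat v1 hv1) (hVlat v2 hv2) ha1 ha2 hdet
  -- extreme points form a finite set
  have hEfin : (K.extremePoints ℝ).Finite := by
    apply (lattice_bounded_finite (2/r)).subset
    intro y hy
    exact ⟨hElat y hy, hKbound y (extremePoints_subset hy)⟩
  -- Krein-Milman
  have hKM : closure (convexHull ℝ (K.extremePoints ℝ)) = K :=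
    closure_convexHull_extremePoints hKcompact hKconv
  have hclosed : IsClosed (convexHull ℝ (K.extremePoints ℝ)) :=
    (hEfin.isCompact_convexHull ℝ).isClosed
  have hfin : K = convexHull ℝ (K.extremePoints ℝ) := by
    calc K = closure (convexHull ℝ (K.extremePoints ℝ)) := hKM.symm
    _ = convexHull ℝ (K.extremePoints ℝ) := hclosed.closure_eq
  refine ⟨hEfin.toFinset, fun v hv => hElat v (hEfin.mem_toFinset.mp hv), ?_⟩
  rw [hEfin.coe_toFinset]
  exact hfin
end

section
/- Let Z_N denote the number of involutions of a set with N elements (Z_0 = 1). Then the exponential generating function of (Z_N) satisfies Σ_{N≥0} (Z_N / N!) x^N = exp(x + x²/2) as an identity of formal power series over ℚ (equivalently, for every real x). -/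
open Equiv Equiv.Perm Finset

/-- `Z N`: the number of involutions of an `N`-element set (`Z 0 = 1`). -/

noncomputable def numInvolutions (N : ℕ) : ℕ := Nat.card {σ : Equiv.Perm (Fin N) // σ * σ = 1}

lemma card_invol_eq (α : Type*) [Fintype α] [DecidableEq α] :
    Nat.card {σ : Equiv.Perm α // σ * σ = 1} = numInvolutions (Fintype.card α) := by
  refine Nat.card_congr (Equiv.subtypeEquiv (Equiv.permCongr (Fintype.equivFin α)) fun σ => ?_)
  constructor
  · intro h
    refine Equiv.ext fun x => ?_
    have := congrArg (fun τ : Perm α => (Fintype.equivFin α) (τ ((Fintype.equivFin α).symm x))) h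
    simpa [Perm.mul_apply] using this
  · intro h
    refine Equiv.ext fun x => ?_
    have := congrArg (fun τ : Perm (Fin (Fintype.card α)) =>
      (Fintype.equivFin α).symm (τ ((Fintype.equivFin α) x))) h
    simpa [Perm.mul_apply] using this

section Fiber

variable {α : Type*} [DecidableEq α]

lemma invol_apply_eq_iff {σ : Perm α} (hσ : σ * σ = 1) {a b : α} : σ a = b ↔ σ b = a := by
  have h : ∀ x, σ (σ x) = x := fun x => by
    have := congrArg (fun τ : Perm α => τ x) hσ; simpa [Perm.mul_apply] using this
  constructor
  · rintro rfl; exact h a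
  · rintro rfl; exact h b

/-- involutions sending a fixed point `z` to `i` correspond to involutions of the complement. -/
def fiberEquiv (z i : α) :
    {σ : Perm α // σ * σ = 1 ∧ σ z = i} ≃
      {τ : Perm {x : α // x ≠ z ∧ x ≠ i} // τ * τ = 1} where
  toFun := fun ⟨σ, hσ, hz⟩ => by
    have hiz : σ i = z := (invol_apply_eq_iff hσ).1 hz
    refine ⟨σ.subtypePerm fun x => Iff.symm ?_, ?_⟩
    · constructor
      · rintro ⟨h1, h2⟩
        refine ⟨fun h => h2 ?_, fun h => h1 ?_⟩
        · have := (invol_apply_eq_iff hσ).1 h; rw [hz] at this; exact this.symm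
        · have := (invol_apply_eq_iff hσ).1 h; rw [hiz] at this; exact this.symm
      · rintro ⟨h1, h2⟩
        refine ⟨fun h => h2 ?_, fun h => h1 ?_⟩
        · rw [h, hz]
        · rw [h, hiz]
    · refine Equiv.ext fun ⟨x, hx⟩ => ?_
      simp only [Perm.mul_apply, Perm.subtypePerm_apply, Perm.one_apply, Subtype.mk.injEq]
      exact (invol_apply_eq_iff hσ).2 rfl
  invFun := fun ⟨τ, hτ⟩ => by
    have hfix : ∀ x : α, ¬(x ≠ z ∧ x ≠ i) → Equiv.Perm.ofSubtype τ x = x := fun x hx =>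
      Equiv.Perm.ofSubtype_apply_of_not_mem τ hx
    have hz' : Equiv.Perm.ofSubtype τ z = z := hfix z (by simp)
    have hi' : Equiv.Perm.ofSubtype τ i = i := hfix i (by simp)
    have hcomm : Equiv.swap z i * Equiv.Perm.ofSubtype τ
        = Equiv.Perm.ofSubtype τ * Equiv.swap z i := by
      refine Equiv.ext fun x => ?_
      by_cases hx : x ≠ z ∧ x ≠ i
      · have hmem : (Equiv.Perm.ofSubtype τ) x = ↑(τ ⟨x, hx⟩) :=
          Equiv.Perm.ofSubtype_apply_of_mem τ hx
        simp only [Perm.mul_apply]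
        rw [Equiv.swap_apply_of_ne_of_ne hx.1 hx.2, hmem,
          Equiv.swap_apply_of_ne_of_ne (τ ⟨x, hx⟩).2.1 (τ ⟨x, hx⟩).2.2]
      · push_neg at hx
        by_cases hxz : x = z
        · subst hxz
          simp only [Perm.mul_apply, Equiv.swap_apply_left, hi', hz',
            Equiv.swap_apply_left]
        · have hxi : x = i := by tauto
          subst hxi
          simp only [Perm.mul_apply, Equiv.swap_apply_right, hz', hi',
            Equiv.swap_apply_right]
    refine ⟨Equiv.Perm.ofSubtype τ * Equiv.swap z i, ?_, ?_⟩
    · calc (Equiv.Perm.ofSubtype τ * Equiv.swap z i) * (Equiv.Perm.ofSubtype τ * Equiv.swap z i)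
          = Equiv.Perm.ofSubtype τ * (Equiv.swap z i * Equiv.Perm.ofSubtype τ) * Equiv.swap z i := by
            group
        _ = (Equiv.Perm.ofSubtype τ * Equiv.Perm.ofSubtype τ) * (Equiv.swap z i * Equiv.swap z i) := by
            rw [hcomm]; group
        _ = 1 := by rw [← map_mul, hτ, map_one, Equiv.swap_mul_self, one_mul]
    · simp [Perm.mul_apply, Equiv.swap_apply_left, hi']
  left_inv := by
    rintro ⟨σ, hσ, hz⟩
    have hiz : σ i = z := (invol_apply_eq_iff hσ).1 hz
    refine Subtype.ext (Equiv.ext fun x => ?_)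
    simp only [Perm.mul_apply]
    by_cases hx : x ≠ z ∧ x ≠ i
    · rw [Equiv.swap_apply_of_ne_of_ne hx.1 hx.2,
        Equiv.Perm.ofSubtype_apply_of_mem (p := fun y => y ≠ z ∧ y ≠ i) _ hx]
      rfl
    · push_neg at hx
      by_cases hxz : x = z
      · subst hxz
        rw [Equiv.swap_apply_left, Equiv.Perm.ofSubtype_apply_of_not_mem _ (by simp), hz]
      · have hxi : x = i := by tauto
        subst hxi
        rw [Equiv.swap_apply_right, Equiv.Perm.ofSubtype_apply_of_not_mem _ (by simp), hiz]
  right_inv := by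
    rintro ⟨τ, hτ⟩
    refine Subtype.ext (Equiv.ext fun ⟨x, hx⟩ => ?_)
    refine Subtype.ext ?_
    simp only [Perm.subtypePerm_apply, Perm.mul_apply]
    rw [Equiv.swap_apply_of_ne_of_ne hx.1 hx.2, Equiv.Perm.ofSubtype_apply_of_mem τ hx]

end Fiber

lemma numInvolutions_add_two (n : ℕ) :
    numInvolutions (n + 2) = numInvolutions (n + 1) + (n + 1) * numInvolutions n := by
  classical
  have e1 : {σ : Perm (Fin (n+2)) // σ * σ = 1} ≃
      Σ i : Fin (n+2), {σ : Perm (Fin (n+2)) // σ * σ = 1 ∧ σ 0 = i} := by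
    refine (Equiv.sigmaFiberEquiv (fun σ : {σ : Perm (Fin (n+2)) // σ * σ = 1} => σ.1 0)).symm.trans
      (Equiv.sigmaCongrRight fun i => ?_)
    exact Equiv.subtypeSubtypeEquivSubtypeInter (fun σ : Perm (Fin (n+2)) => σ * σ = 1) (fun σ => σ 0 = i)
  have key : ∀ i : Fin (n+2), Nat.card {σ : Perm (Fin (n+2)) // σ * σ = 1 ∧ σ 0 = i}
      = numInvolutions (if i = 0 then n+1 else n) := by
    intro i
    rw [Nat.card_congr (fiberEquiv 0 i), card_invol_eq]
    congr 1
    by_cases hi : i = 0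
    · subst hi
      simp only [if_pos rfl]
      rw [Fintype.card_congr (Equiv.subtypeEquivRight (q := fun x : Fin (n+2) => ¬(x = 0))
        (fun x => by tauto))]
      rw [Fintype.card_subtype_compl, Fintype.card_subtype_eq, Fintype.card_fin]
      simp
    · rw [if_neg hi]
      rw [Fintype.card_subtype]
      have : (Finset.univ.filter fun x : Fin (n+2) => x ≠ 0 ∧ x ≠ i)
          = Finset.univ \ {0, i} := by
        ext x; simp [and_comm]
      rw [this, Finset.card_sdiff_of_subset (by simp)]
      have h2 : ({0, i} : Finset (Fin (n+2))).card = 2 := by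
        rw [Finset.card_insert_of_notMem (by simp [Ne.symm hi]), Finset.card_singleton]
      rw [h2, Finset.card_univ, Fintype.card_fin]
      omega
  have := Nat.card_congr e1
  rw [Nat.card_eq_fintype_card, Nat.card_eq_fintype_card, Fintype.card_sigma] at this
  have hsum : ∀ i : Fin (n+2), Fintype.card {σ : Perm (Fin (n+2)) // σ * σ = 1 ∧ σ 0 = i}
      = numInvolutions (if i = 0 then n+1 else n) := fun i => by
    rw [← Nat.card_eq_fintype_card]; exact key i
  calc numInvolutions (n+2) = Fintype.card {σ : Perm (Fin (n+2)) // σ * σ = 1} := by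
        rw [numInvolutions, Nat.card_eq_fintype_card]
    _ = ∑ i : Fin (n+2), numInvolutions (if i = 0 then n+1 else n) := by
        rw [this]; exact Finset.sum_congr rfl fun i _ => hsum i
    _ = numInvolutions (n+1) + (n+1) * numInvolutions n := by
        rw [Fin.sum_univ_succ]
        simp [Fin.succ_ne_zero, Finset.sum_const, mul_comm]

lemma numInvolutions_zero : numInvolutions 0 = 1 := by
  rw [numInvolutions, Nat.card_eq_fintype_card]; decide

lemma numInvolutions_one : numInvolutions 1 = 1 := by
  rw [numInvolutions, Nat.card_eq_fintype_card]; decide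

noncomputable def cinv (N m : ℕ) : ℝ := (((N - 2*m).factorial * 2 ^ m * m.factorial : ℕ) : ℝ)⁻¹

noncomputable def rcoef (N : ℕ) : ℝ := ∑ m ∈ Finset.range (N / 2 + 1), cinv N m

lemma rcoef_zero : rcoef 0 = 1 := by simp [rcoef, cinv]

lemma rcoef_one : rcoef 1 = 1 := by simp [rcoef, cinv]

lemma cinv_T1 (n m : ℕ) (h : 2*m ≤ n+1) :
    ((n + 2 - 2*m : ℕ) : ℝ) * cinv (n+2) m = cinv (n+1) m := by
  have hz : n + 2 - 2*m ≠ 0 := by omega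
  have h1 : n + 2 - 2*m = (n + 1 - 2*m) + 1 := by omega
  have key : ((n + 2 - 2*m).factorial * 2 ^ m * m.factorial : ℕ)
      = (n + 2 - 2*m) * ((n + 1 - 2*m).factorial * 2 ^ m * m.factorial) := by
    rw [h1, Nat.factorial_succ, ← h1]; ring
  rw [cinv, cinv, key, Nat.cast_mul, mul_inv, ← mul_assoc,
    mul_inv_cancel₀ (Nat.cast_ne_zero.mpr hz), one_mul]

lemma cinv_T2 (n m : ℕ) :
    ((2*(m+1) : ℕ) : ℝ) * cinv (n+2) (m+1) = cinv n m := by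
  have hz : 2*(m+1) ≠ 0 := by omega
  have h1 : n + 2 - 2*(m+1) = n - 2*m := by omega
  have key : ((n + 2 - 2*(m+1)).factorial * 2 ^ (m+1) * (m+1).factorial : ℕ)
      = (2*(m+1)) * ((n - 2*m).factorial * 2 ^ m * m.factorial) := by
    rw [h1, Nat.factorial_succ, pow_succ]; ring
  rw [cinv, cinv, key,
    Nat.cast_mul (2*(m+1)) ((n - 2*m).factorial * 2 ^ m * m.factorial), mul_inv,
    ← mul_assoc, mul_inv_cancel₀ (Nat.cast_ne_zero.mpr hz), one_mul]

lemma rcoef_rec (n : ℕ) : ((n : ℝ) + 2) * rcoef (n+2) = rcoef (n+1) + rcoef n := by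
  have hsplit : ∀ m ∈ Finset.range ((n+2)/2 + 1),
      ((n : ℝ) + 2) * cinv (n+2) m
        = ((n + 2 - 2*m : ℕ) : ℝ) * cinv (n+2) m + (2*m : ℝ) * cinv (n+2) m := by
    intro m hm
    rw [Finset.mem_range] at hm
    have h2m : 2*m ≤ n + 2 := by omega
    have : ((n + 2 - 2*m : ℕ) : ℝ) = (n : ℝ) + 2 - 2*m := by
      push_cast [Nat.cast_sub h2m]; ring
    rw [this]; ring
  rw [rcoef, Finset.mul_sum, Finset.sum_congr rfl hsplit, Finset.sum_add_distrib]
  have hB : ∑ m ∈ Finset.range ((n+2)/2 + 1), (2*m : ℝ) * cinv (n+2) m = rcoef n := by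
    rw [Finset.sum_range_succ']
    simp only [Nat.cast_zero, mul_zero, zero_mul, add_zero]
    have hK : (n+2)/2 = n/2 + 1 := by omega
    rw [hK, rcoef]
    refine Finset.sum_congr rfl fun m _ => ?_
    have := cinv_T2 n m
    rw [← this]; push_cast; ring
  have hA : ∑ m ∈ Finset.range ((n+2)/2 + 1), ((n + 2 - 2*m : ℕ) : ℝ) * cinv (n+2) m
      = rcoef (n+1) := by
    rcases Nat.even_or_odd n with ⟨k, hk⟩ | ⟨k, hk⟩
    · -- n = k + k, even
      have h1 : (n+2)/2 + 1 = ((n+1)/2 + 1) + 1 := by omega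
      rw [h1, Finset.sum_range_succ]
      have hlast : n + 2 - 2*((n+1)/2 + 1) = 0 := by omega
      rw [hlast]
      simp only [Nat.cast_zero, zero_mul, add_zero]
      rw [rcoef]
      refine Finset.sum_congr rfl fun m hm => ?_
      rw [Finset.mem_range] at hm
      exact cinv_T1 n m (by omega)
    · -- n odd
      have h1 : (n+2)/2 + 1 = (n+1)/2 + 1 := by omega
      rw [h1, rcoef]
      refine Finset.sum_congr rfl fun m hm => ?_
      rw [Finset.mem_range] at hm
      exact cinv_T1 n m (by omega)
  rw [hA, hB]

lemma coef_eq (N : ℕ) : (numInvolutions N : ℝ) = N.factorial * rcoef N := by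
  induction N using Nat.strong_induction_on with
  | _ N ih =>
    match N with
    | 0 => simp [numInvolutions_zero, rcoef_zero]
    | 1 => simp [numInvolutions_one, rcoef_one]
    | (n+2) =>
      rw [numInvolutions_add_two]
      push_cast
      rw [ih (n+1) (by omega), ih n (by omega)]
      have hrec := rcoef_rec n
      have h1 : ((n+1).factorial : ℝ) = ((n:ℝ)+1) * n.factorial := by
        rw [Nat.factorial_succ]; push_cast; ring
      have h2 : ((n+2).factorial : ℝ) = ((n:ℝ)+2) * (n+1).factorial := by
        rw [show n+2 = (n+1)+1 from rfl, Nat.factorial_succ (n+1)]; push_cast; ring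
      rw [h2, h1]
      linear_combination (-(((n:ℝ)+1) * (n.factorial:ℝ))) * hrec

/-- the exponential generating function of the numbers of involutions is
`exp (x + x²/2)`: for every real `x`, `Σ_{N≥0} (Z_N / N!) x^N = exp (x + x²/2)`. -/
theorem egf_numInvolutions (x : ℝ) :
    ∑' N : ℕ, ((numInvolutions N : ℝ) / N.factorial) * x ^ N
      = Real.exp (x + x ^ 2 / 2) := by
  have hf : HasSum (fun n : ℕ => x ^ n / n.factorial) (Real.exp x) := by
    rw [Real.exp_eq_exp_ℝ]; exact NormedSpace.expSeries_div_hasSum_exp x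
  have hg : HasSum (fun m : ℕ => (x^2/2) ^ m / m.factorial) (Real.exp (x^2/2)) := by
    rw [Real.exp_eq_exp_ℝ]; exact NormedSpace.expSeries_div_hasSum_exp (x^2/2)
  have habs : ∀ y : ℝ, Summable fun n : ℕ => ‖y ^ n / n.factorial‖ := by
    intro y
    have h' : HasSum (fun n : ℕ => |y| ^ n / n.factorial) (Real.exp |y|) := by
      rw [Real.exp_eq_exp_ℝ]; exact NormedSpace.expSeries_div_hasSum_exp |y|
    refine h'.summable.congr fun n => ?_
    simp [abs_div, abs_pow, Nat.abs_cast]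
  have hsum := summable_mul_of_summable_norm (habs x) (habs (x^2/2))
  have hprod : HasSum
      (fun p : ℕ × ℕ => (x ^ p.1 / p.1.factorial) * ((x^2/2) ^ p.2 / p.2.factorial))
      (Real.exp x * Real.exp (x^2/2)) :=
    HasSum.mul (f := fun n : ℕ => x ^ n / (n.factorial : ℝ))
      (g := fun m : ℕ => (x^2/2) ^ m / (m.factorial : ℝ)) hf hg hsum
  have hfib := hprod.tsum_fiberwise (fun p => p.1 + 2 * p.2)
  have hcoef : ∀ N : ℕ,
      (∑' p : ((fun p : ℕ × ℕ => p.1 + 2 * p.2) ⁻¹' {N}),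
        (x ^ (p : ℕ × ℕ).1 / (p : ℕ × ℕ).1.factorial)
          * ((x^2/2) ^ (p : ℕ × ℕ).2 / (p : ℕ × ℕ).2.factorial))
      = ((numInvolutions N : ℝ) / N.factorial) * x ^ N := by
    intro N
    have hset : ((fun p : ℕ × ℕ => p.1 + 2 * p.2) ⁻¹' {N})
        = ↑((Finset.range (N/2+1)).image fun m => (N - 2*m, m)) := by
      ext ⟨a, b⟩
      simp only [Set.mem_preimage, Set.mem_singleton_iff, Finset.coe_image,
        Set.mem_image, Finset.mem_coe, Finset.mem_range, Prod.mk.injEq]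
      constructor
      · intro h; exact ⟨b, by omega, by omega, rfl⟩
      · rintro ⟨m, hm, rfl, rfl⟩; omega
    rw [hset, Finset.tsum_subtype' ((Finset.range (N/2+1)).image fun m => (N - 2*m, m))
      (fun p : ℕ × ℕ => x ^ p.1 / p.1.factorial * ((x^2/2) ^ p.2 / p.2.factorial)),
      Finset.sum_image (fun a _ b _ h => by simpa using congrArg Prod.snd h)]
    have hterm : ∀ m ∈ Finset.range (N/2+1),
        (x ^ (N - 2*m) / (N - 2*m).factorial) * ((x^2/2) ^ m / m.factorial)
          = cinv N m * x ^ N := by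
      intro m hm
      rw [Finset.mem_range] at hm
      have h2m : 2*m ≤ N := by omega
      have hx : x ^ (N - 2*m) * x ^ (2*m) = x ^ N := by
        rw [← pow_add]; congr 1; omega
      rw [cinv, ← hx]
      have e1 : ((x^2)/2) ^ m = x ^ (2*m) / 2 ^ m := by
        rw [div_pow, ← pow_mul]
      rw [e1]
      push_cast
      ring
    rw [Finset.sum_congr rfl hterm, ← Finset.sum_mul]
    rw [coef_eq N]
    have hfac : ((N.factorial : ℝ)) ≠ 0 := by positivity
    rw [rcoef]
    field_simp
  have := hfib.tsum_eq
  rw [tsum_congr hcoef] at this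
  rw [this, ← Real.exp_add]
end

section
/- Let Δ be an IP polytope in ℝ^d and define Δ~ = conv(Δ* ∩ ℤ^d), the convex hull of the lattice points of the polar dual. Suppose Δ is IP-confined, i.e. 0 lies in the interior of Δ~. Then Δ ⊆ (Δ~)~ = Δ~~, and applying the operation three times returns Δ~: ((Δ~)~)~ = Δ~. In particular, Δ ↦ Δ~ restricts to an involution on the set of IPC-closed polytopes (those IP-confined polytopes with Δ~~ = Δ), and every reflexive polytope is IPC-closed, with Δ~ = Δ*. -/
/-- `Δ~ = conv(Δ* ∩ ℤ^d)`, the convex hull of the lattice points of the polar dual. -/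
def tildeDual {d : ℕ} (P : Set (Fin d → ℝ)) : Set (Fin d → ℝ) :=
  convexHull ℝ {y ∈ polarDual P | IsLatticePoint y}

section Helpers
variable {d : ℕ}

lemma isLinearMap_dotL (v : Fin d → ℝ) :
    IsLinearMap ℝ (fun y : Fin d → ℝ => ∑ i, y i * v i) := by
  constructor
  · intro a b; simp [add_mul, Finset.sum_add_distrib]
  · intro c a; simp [Finset.mul_sum, mul_assoc]

lemma isLinearMap_dotR (v : Fin d → ℝ) :
    IsLinearMap ℝ (fun y : Fin d → ℝ => ∑ i, v i * y i) := by
  constructor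
  · intro a b; simp [mul_add, Finset.sum_add_distrib]
  · intro c a
    simp only [Pi.smul_apply, smul_eq_mul, Finset.mul_sum]
    exact Finset.sum_congr rfl fun i _ => by ring

lemma convex_polarDual (P : Set (Fin d → ℝ)) : Convex ℝ (polarDual P) := by
  have h : polarDual P = ⋂ x ∈ P, {y : Fin d → ℝ | -1 ≤ ∑ i, y i * x i} := by
    ext y; simp [polarDual]
  rw [h]
  exact convex_iInter fun x => convex_iInter fun _ => convex_halfSpace_ge (isLinearMap_dotL x) _

lemma polarDual_anti {P Q : Set (Fin d → ℝ)} (h : P ⊆ Q) : polarDual Q ⊆ polarDual P :=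
  fun _ hy x hx => hy x (h hx)

lemma tildeDual_subset_polarDual (P : Set (Fin d → ℝ)) : tildeDual P ⊆ polarDual P :=
  convexHull_min (fun _ hy => hy.1) (convex_polarDual P)

lemma tildeDual_anti {P Q : Set (Fin d → ℝ)} (h : P ⊆ Q) : tildeDual Q ⊆ tildeDual P :=
  convexHull_mono fun _ hy => ⟨polarDual_anti h hy.1, hy.2⟩

lemma mem_polarDual_tildeDual {P : Set (Fin d → ℝ)} {v : Fin d → ℝ} (hv : v ∈ P) :
    v ∈ polarDual (tildeDual P) := by
  intro z hz
  have hsub : {y ∈ polarDual P | IsLatticePoint y} ⊆ {z : Fin d → ℝ | -1 ≤ ∑ i, v i * z i} := by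
    intro y hy
    have h1 : -1 ≤ ∑ i, y i * v i := hy.1 v hv
    have h2 : ∑ i, v i * y i = ∑ i, y i * v i := Finset.sum_congr rfl fun i _ => mul_comm _ _
    simpa [h2] using h1
  exact convexHull_min hsub (convex_halfSpace_ge (isLinearMap_dotR v) _) hz

lemma subset_tildeDual_tildeDual {P S : Set (Fin d → ℝ)}
    (hP : P = convexHull ℝ S) (hS : ∀ s ∈ S, IsLatticePoint s) :
    P ⊆ tildeDual (tildeDual P) := by
  conv_lhs => rw [hP]
  refine convexHull_min (fun s hs => ?_) (convex_convexHull ℝ _)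
  have hsP : s ∈ P := hP ▸ subset_convexHull ℝ S hs
  exact subset_convexHull ℝ _ ⟨mem_polarDual_tildeDual hsP, hS s hs⟩

lemma exists_pos_smul_mem {U : Set (Fin d → ℝ)} (hU : IsOpen U) {x v : Fin d → ℝ}
    (hx : x ∈ U) : ∃ δ : ℝ, 0 < δ ∧ x + δ • v ∈ U := by
  have hcont : ContinuousAt (fun δ : ℝ => x + δ • v) 0 := by fun_prop
  have hmem : (fun δ : ℝ => x + δ • v) 0 ∈ U := by simpa using hx
  have hev : ∀ᶠ δ in nhds (0 : ℝ), x + δ • v ∈ U := hcont.eventually_mem (hU.mem_nhds hmem)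
  obtain ⟨ε, hε, h⟩ := Metric.eventually_nhds_iff.1 hev
  refine ⟨ε / 2, by linarith, h ?_⟩
  rw [Real.dist_eq, sub_zero, abs_of_pos (by linarith : (0:ℝ) < ε / 2)]
  linarith

lemma interior_tilde_lattice_eq_zero {Δ : Set (Fin d → ℝ)} (hΔ : IsIPPolytope Δ)
    {x : Fin d → ℝ} (hx : x ∈ interior (tildeDual Δ)) (hlat : IsLatticePoint x) : x = 0 := by
  obtain ⟨⟨V, hVlat, hVconv⟩, h0, _⟩ := hΔ
  choose a ha using hlat
  have claimA : ∀ v ∈ (V : Set (Fin d → ℝ)), 0 ≤ ∑ i, x i * v i := by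
    intro v hv
    by_cases hv0 : v = 0
    · simp [hv0]
    have hvΔ : v ∈ Δ := hVconv ▸ subset_convexHull ℝ _ hv
    obtain ⟨δ, hδ, hmem⟩ := exists_pos_smul_mem isOpen_interior hx (v := -v)
    have hz : x + δ • (-v) ∈ polarDual Δ :=
      tildeDual_subset_polarDual Δ (interior_subset hmem)
    have hineq : -1 ≤ ∑ i, (x + δ • (-v)) i * v i := hz v hvΔ
    have hsum : ∑ i, (x + δ • (-v)) i * v i = (∑ i, x i * v i) - δ * ∑ i, v i * v i := by
      rw [Finset.mul_sum, ← Finset.sum_sub_distrib]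
      exact Finset.sum_congr rfl fun i _ => by simp; ring
    have hvv : 0 < ∑ i, v i * v i := by
      have hne : ∃ i, v i ≠ 0 := by
        by_contra hcon
        push_neg at hcon
        exact hv0 (funext hcon)
      obtain ⟨i, hi⟩ := hne
      refine Finset.sum_pos' (fun j _ => mul_self_nonneg _) ⟨i, Finset.mem_univ i, ?_⟩
      exact mul_self_pos.2 hi
    have hgt : (-1 : ℝ) < ∑ i, x i * v i := by
      rw [hsum] at hineq
      nlinarith
    -- integrality
    choose b hb using hVlat v hv
    have hcast : ∑ i, x i * v i = ((∑ i, a i * b i : ℤ) : ℝ) := by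
      push_cast
      exact Finset.sum_congr rfl fun i _ => by rw [ha i, hb i]
    rw [hcast] at hgt ⊢
    have : (-1 : ℤ) < ∑ i, a i * b i := by exact_mod_cast hgt
    exact_mod_cast this
  have claimB : ∀ y ∈ Δ, 0 ≤ ∑ i, x i * y i := by
    rw [hVconv]
    exact fun y hy =>
      convexHull_min claimA (convex_halfSpace_ge (isLinearMap_dotR x) 0) hy
  obtain ⟨δ, hδ, hmem⟩ := exists_pos_smul_mem isOpen_interior h0 (v := -x)
  have hB := claimB _ (interior_subset hmem)
  have hsum : ∑ i, x i * ((0 : Fin d → ℝ) + δ • (-x)) i = -δ * ∑ i, x i * x i := by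
    rw [Finset.mul_sum]
    exact Finset.sum_congr rfl fun i _ => by simp; ring
  rw [hsum] at hB
  have hxx : 0 ≤ ∑ i, x i * x i := Finset.sum_nonneg fun i _ => mul_self_nonneg _
  have hzero : ∑ i, x i * x i = 0 := by nlinarith
  have := (Finset.sum_eq_zero_iff_of_nonneg (fun i _ => mul_self_nonneg (x i))).1 hzero
  funext i
  exact mul_self_eq_zero.1 (this i (Finset.mem_univ i))

lemma finite_latticePoints_polarDual {Δ : Set (Fin d → ℝ)}
    (h0 : (0 : Fin d → ℝ) ∈ interior Δ) :
    {y ∈ polarDual Δ | IsLatticePoint y}.Finite := by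
  have hb : ∀ i : Fin d, ∃ c : ℝ, ∀ y ∈ polarDual Δ, |y i| ≤ c := by
    intro i
    set e : Fin d → ℝ := Pi.single i (1:ℝ) with he
    obtain ⟨δ, hδ, hp⟩ := exists_pos_smul_mem (v := e) isOpen_interior h0
    obtain ⟨δ', hδ', hn⟩ := exists_pos_smul_mem (v := -e) isOpen_interior h0
    refine ⟨max (1/δ) (1/δ'), fun y hy => ?_⟩
    have h1 : -1 ≤ ∑ j, y j * ((0:Fin d → ℝ) + δ • e) j :=
      hy _ (interior_subset hp)
    have h2 : -1 ≤ ∑ j, y j * ((0:Fin d → ℝ) + δ' • (-e)) j :=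
      hy _ (interior_subset hn)
    have e1 : ∑ j, y j * ((0:Fin d → ℝ) + δ • e) j = δ * y i := by
      simp [he, Pi.single_apply, mul_ite, Finset.sum_ite_eq', mul_comm]
    have e2 : ∑ j, y j * ((0:Fin d → ℝ) + δ' • (-e)) j = -(δ' * y i) := by
      simp [he, Pi.single_apply, mul_ite, Finset.sum_ite_eq', mul_comm]
    rw [e1] at h1; rw [e2] at h2
    rw [abs_le]
    constructor
    · have : -(1/δ) ≤ y i := by
        rw [neg_le, le_div_iff₀ hδ]; nlinarith
      calc -max (1/δ) (1/δ') ≤ -(1/δ) := by simp [le_max_left]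
        _ ≤ y i := this
    · have : y i ≤ 1/δ' := by
        rw [le_div_iff₀ hδ']; nlinarith
      exact this.trans (le_max_right _ _)
  choose c hc using hb
  have hfin : ∀ i, {r : ℝ | |r| ≤ c i ∧ ∃ z : ℤ, r = (z:ℝ)}.Finite := by
    intro i
    apply Set.Finite.subset ((Set.finite_Icc (⌈-(c i)⌉) ⌊c i⌋).image (fun z : ℤ => (z:ℝ)))
    rintro r ⟨hr, z, rfl⟩
    refine ⟨z, Set.mem_Icc.2 ⟨?_, ?_⟩, rfl⟩
    · rw [Int.ceil_le]; push_cast; linarith [(abs_le.1 hr).1]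
    · rw [Int.le_floor]; exact (abs_le.1 hr).2
  apply Set.Finite.subset (Set.Finite.pi hfin)
  rintro y ⟨hy, hlat⟩ i _
  exact ⟨hc i y hy, hlat i⟩

lemma subset_bipolar (P : Set (Fin d → ℝ)) : P ⊆ polarDual (polarDual P) := by
  intro x hx z hz
  have h1 : -1 ≤ ∑ i, z i * x i := hz x hx
  have h2 : ∑ i, x i * z i = ∑ i, z i * x i := Finset.sum_congr rfl fun i _ => mul_comm _ _
  rw [h2]; exact h1

lemma bipolar {Δ : Set (Fin d → ℝ)} (hconv : Convex ℝ Δ) (hcl : IsClosed Δ)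
    (h0 : (0 : Fin d → ℝ) ∈ Δ) : polarDual (polarDual Δ) = Δ := by
  refine Set.Subset.antisymm ?_ (subset_bipolar Δ)
  intro x hx
  by_contra hxΔ
  obtain ⟨f, u, hfa, hfx⟩ := geometric_hahn_banach_closed_point hconv hcl hxΔ
  have hu : 0 < u := by simpa using hfa 0 h0
  set w : Fin d → ℝ := fun i => f (Pi.single i 1) with hw
  have hfrep : ∀ y : Fin d → ℝ, f y = ∑ i, y i * w i := by
    intro y
    have hy : y = ∑ i, Pi.single i (y i) := (Finset.univ_sum_single y).symm
    conv_lhs => rw [hy]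
    rw [map_sum]
    refine Finset.sum_congr rfl fun i _ => ?_
    have hsingle : Pi.single i (y i) = y i • (Pi.single i (1:ℝ) : Fin d → ℝ) := by
      rw [← Pi.single_smul, smul_eq_mul, mul_one]
    rw [hsingle, map_smul, smul_eq_mul]
  set z : Fin d → ℝ := fun i => -(1/u) * w i with hzdef
  have hzP : z ∈ polarDual Δ := by
    intro a haΔ
    have hfa' : f a < u := hfa a haΔ
    have hrep := hfrep a
    have hsum : ∑ i, z i * a i = -(1/u) * f a := by
      rw [hrep, Finset.mul_sum]
      exact Finset.sum_congr rfl fun i _ => by simp [hzdef]; ring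
    rw [hsum]
    have h1u : 0 < 1/u := by positivity
    have := mul_lt_mul_of_pos_right hfa' h1u
    rw [mul_one_div_cancel hu.ne'] at this
    nlinarith
  have hxz : -1 ≤ ∑ i, x i * z i := hx z hzP
  have hsum : ∑ i, x i * z i = -(1/u) * f x := by
    rw [hfrep x, Finset.mul_sum]
    exact Finset.sum_congr rfl fun i _ => by simp [hzdef]; ring
  rw [hsum] at hxz
  have h1u : 0 < 1/u := by positivity
  have := mul_lt_mul_of_pos_right hfx h1u
  rw [mul_one_div_cancel hu.ne'] at this
  nlinarith

end Helpers

/-- for an IP-confined IP polytope `Δ` (i.e. `0 ∈ interior Δ~`) one has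
`Δ ⊆ Δ~~` and `Δ~~~ = Δ~`; hence `Δ ↦ Δ~` restricts to an involution on IPC-closed
polytopes (those with `Δ~~ = Δ`), and every reflexive polytope is IPC-closed with
`Δ~ = Δ*`. -/
theorem tildeDual_involution {d : ℕ} (Δ : Set (Fin d → ℝ))
    (hΔ : IsIPPolytope Δ)
    (hconf : (0 : Fin d → ℝ) ∈ interior (tildeDual Δ)) :
    Δ ⊆ tildeDual (tildeDual Δ) ∧
    tildeDual (tildeDual (tildeDual Δ)) = tildeDual Δ ∧
    (tildeDual (tildeDual Δ) = Δ →
      IsIPPolytope (tildeDual Δ) ∧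
      (0 : Fin d → ℝ) ∈ interior (tildeDual (tildeDual Δ)) ∧
      tildeDual (tildeDual (tildeDual Δ)) = tildeDual Δ) ∧
    (IsReflexive Δ → tildeDual Δ = polarDual Δ ∧ tildeDual (tildeDual Δ) = Δ) := by
  obtain ⟨V, hVlat, hVconv⟩ := hΔ.1
  have h0 : (0 : Fin d → ℝ) ∈ interior Δ := hΔ.2.1
  have part1 : Δ ⊆ tildeDual (tildeDual Δ) :=
    subset_tildeDual_tildeDual hVconv (fun s hs => hVlat s hs)
  have part2 : tildeDual (tildeDual (tildeDual Δ)) = tildeDual Δ := by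
    refine Set.Subset.antisymm (tildeDual_anti part1) ?_
    exact subset_tildeDual_tildeDual (S := {y ∈ polarDual Δ | IsLatticePoint y}) rfl
      (fun s hs => hs.2)
  refine ⟨part1, part2, fun h => ⟨?_, by rw [h]; exact h0, part2⟩, ?_⟩
  · -- IsIPPolytope (tildeDual Δ)
    refine ⟨?_, hconf, fun x hx hlat => interior_tilde_lattice_eq_zero hΔ hx hlat⟩
    have hfin := finite_latticePoints_polarDual h0
    refine ⟨hfin.toFinset, fun v hv => (hfin.mem_toFinset.1 hv).2, ?_⟩
    unfold tildeDual
    rw [Set.Finite.coe_toFinset]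
  · -- reflexive case
    rintro ⟨_, W, hWlat, hWconv⟩
    have hT : tildeDual Δ = polarDual Δ := by
      refine Set.Subset.antisymm (tildeDual_subset_polarDual Δ) ?_
      conv_lhs => rw [hWconv]
      refine convexHull_min (fun w hw => ?_) (convex_convexHull ℝ _)
      exact subset_convexHull ℝ _ ⟨hWconv ▸ subset_convexHull ℝ _ hw, hWlat w hw⟩
    refine ⟨hT, ?_⟩
    have hΔconv : Convex ℝ Δ := hVconv ▸ convex_convexHull ℝ _
    have hΔcl : IsClosed Δ := by
      rw [hVconv]
      exact (V.finite_toSet.isCompact_convexHull ℝ).isClosed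
    have hbi : polarDual (polarDual Δ) = Δ := bipolar hΔconv hΔcl (interior_subset h0)
    rw [hT]
    unfold tildeDual
    rw [hbi]
    refine Set.Subset.antisymm (convexHull_min (fun y hy => hy.1) hΔconv) ?_
    conv_lhs => rw [hVconv]
    exact convexHull_mono (fun v hv => ⟨hVconv ▸ subset_convexHull ℝ _ hv, hVlat v hv⟩)
end
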